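/- In the k-compatibility construction of trigger graphs, every node constructed at iteration k has depth exactly k−1 in the graph built so far, where the depth of a node is the length of the longest directed path ending at it; consequently, no tuple of nodes is k-compatible with a rule at two different iterations k ≠ k′, so each node tuple is used to construct at most one new node over the whole run. -/
import Mathlib


/-- `PathEnd E n v`: there is a directed path of length `n` ending at `v`
in the graph with edge relation `E`. -/
def PathEnd {V : Type} (E : V → V → Prop) : ℕ → V → Prop
  | 0, _ => True
  | n + 1, v => ∃ u, E u v ∧ PathEnd E n u

/-- `v` has depth `n`: the longest directed path ending at `v` has length `n`. -/
def HasDepth {V : Type} (E : V → V → Prop) (v : V) (n : ℕ) : Prop :=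
  PathEnd E n v ∧ ∀ m : ℕ, n < m → ¬ PathEnd E m v

/-- A tuple `us` of nodes is `k`-compatible (with some rule): each node has depth `< k`
and at least one node has depth exactly `k − 1`. -/
def KCompat {V : Type} (E : V → V → Prop) (us : List V) (k : ℕ) : Prop :=
  (∀ u ∈ us, ∃ d, HasDepth E u d ∧ d < k) ∧ ∃ u ∈ us, HasDepth E u (k - 1)

/-- In the `k`-compatibility construction of trigger graphs — where nodes constructed at
iteration `1` are leaves, and a node constructed at iteration `k ≥ 2` has its incoming
edges from nodes of depth `< k − 1`, at least one of which has depth exactly `k − 2` —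
every node constructed at iteration `k` has depth exactly `k − 1`; consequently, no tuple
of nodes is `k`-compatible at two different iterations, so each node tuple is used to
construct at most one new node over the whole run. -/
lemma hasDepth_unique {V : Type} {E : V → V → Prop} {v : V} {n m : ℕ}
    (h : HasDepth E v n) (h' : HasDepth E v m) : n = m := by
  rcases lt_trichotomy n m with hlt | he | hlt
  · exact absurd h'.1 (h.2 m hlt)
  · exact he
  · exact absurd h.1 (h'.2 n hlt)

theorem kcompat_depth_unique (V : Type) (E : V → V → Prop) (iter : V → ℕ)
    (hiter : ∀ v, 1 ≤ iter v)
    (hleaf : ∀ v, iter v = 1 → ∀ u, ¬ E u v)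
    (hbuild : ∀ v, 2 ≤ iter v →
      (∀ u, E u v → ∃ d, HasDepth E u d ∧ d < iter v - 1) ∧
      (∃ u, E u v ∧ HasDepth E u (iter v - 2))) :
    (∀ v, HasDepth E v (iter v - 1)) ∧
    (∀ (us : List V) (k k' : ℕ), 2 ≤ k → 2 ≤ k' →
      KCompat E us k → KCompat E us k' → k = k') := by
  constructor
  · intro v
    by_cases h1 : iter v = 1
    · simp only [h1]
      refine ⟨trivial, ?_⟩
      intro m hm hp
      rcases m with _ | m
      · omega
      · rcases hp with ⟨u, hu, _⟩
        exact hleaf v h1 u hu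
    · have h2 : 2 ≤ iter v := by have := hiter v; omega
      obtain ⟨hlt, u, huv, hud⟩ := hbuild v h2
      constructor
      · have : iter v - 1 = (iter v - 2) + 1 := by omega
        rw [this]
        exact ⟨u, huv, hud.1⟩
      · intro m hm hp
        rcases m with _ | m
        · omega
        · rcases hp with ⟨u', hu', hp'⟩
          obtain ⟨d, hd, hdlt⟩ := hlt u' hu'
          exact hd.2 m (by omega) hp'
  · intro us k k' hk hk' ⟨ha, u, hu, hdu⟩ ⟨ha', u', hu', hdu'⟩
    obtain ⟨d, hd, hdlt⟩ := ha' u hu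
    obtain ⟨d', hd', hdlt'⟩ := ha u' hu'
    have e1 := hasDepth_unique hdu hd
    have e2 := hasDepth_unique hdu' hd'
    omega
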